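/- A family of subsets of a finite set that shatters no set of size d has at most Σ_{i=0}^{d-1} C(t,i) members, where t is the size of the ground set. -/

import Mathlib

/-- A family of subsets of a `t`-element set that shatters no set of size `d`
has at most `Σ_{i<d} C(t,i)` members. -/
theorem stmt_2 (t d : ℕ) (T : Finset (Finset (Fin t)))
    (h : ∀ I : Finset (Fin t), I.card = d → ¬ (∀ J ⊆ I, ∃ S ∈ T, S ∩ I = J)) :
    T.card ≤ ∑ i ∈ Finset.range d, t.choose i := by
  refine (Finset.card_le_card_shatterer T).trans ?_
  have hsub : T.shatterer ⊆ (Finset.range d).biUnion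
      (fun i => Finset.powersetCard i (Finset.univ : Finset (Fin t))) := by
    intro s hs
    rw [Finset.mem_shatterer] at hs
    have hlt : s.card < d := by
      by_contra hge
      push_neg at hge
      obtain ⟨I, hIs, hIcard⟩ := Finset.exists_subset_card_eq hge
      refine h I hIcard fun J hJ => ?_
      obtain ⟨S, hS, hSJ⟩ := (hs.mono_right hIs) hJ
      exact ⟨S, hS, by rwa [Finset.inter_comm]⟩
    simp only [Finset.mem_biUnion, Finset.mem_range, Finset.mem_powersetCard]
    exact ⟨s.card, hlt, Finset.subset_univ s, rfl⟩
  refine (Finset.card_le_card hsub).trans ?_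
  refine (Finset.card_biUnion_le).trans ?_
  apply Finset.sum_le_sum
  intro i _
  simp [Finset.card_powersetCard]
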